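/- The sum over all b-multipartitions λ of n of the square of the number of standard Young b-tableaux of shape λ equals bⁿ·n!. -/

import Mathlib

/-- A Young b-tableau of shape λ = (λ¹,...,λᵇ) with n boxes: a bijection from
{1,...,n} to the boxes of the b-tuple of Young diagrams. -/
abbrev MPTableau (b n : ℕ) (lam : Fin b → YoungDiagram) :=
  Fin n ≃ ((j : Fin b) × {c : ℕ × ℕ // c ∈ lam j})

/-- Standard: in each component, entries strictly increase along rows and columns
(equivalently, the entry map is strictly monotone for the componentwise order on
the cells of each component). -/
def IsStandard {b n : ℕ} {lam : Fin b → YoungDiagram} (T : MPTableau b n lam) : Prop :=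
  ∀ (j : Fin b) (c c' : {c : ℕ × ℕ // c ∈ lam j}),
    c.1.1 ≤ c'.1.1 → c.1.2 ≤ c'.1.2 → c ≠ c' → T.symm ⟨j, c⟩ < T.symm ⟨j, c'⟩

/-- m̄_{j-1} = m₁ + ... + m_{j-1}, the left endpoint of the block M_j. -/
def psum {b : ℕ} (lam : Fin b → YoungDiagram) (j : Fin b) : ℕ :=
  ∑ j' ∈ Finset.univ.filter (fun j' => j' < j), (lam j').card

/-- τ ∈ YT₀: for each j, the entries of the j-th component are exactly the block
M_j = {m̄_{j-1}+1, ..., m̄_j}. -/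
def InBlocks {b n : ℕ} {lam : Fin b → YoungDiagram} (T : MPTableau b n lam) : Prop :=
  ∀ i : Fin n, psum lam (T i).1 ≤ (i : ℕ) ∧ (i : ℕ) < psum lam (T i).1 + (lam (T i).1).card

/-- The action of w ∈ Σ_n on tableaux by permuting entries: the box holding entry i in
w·τ is the box holding w⁻¹(i) in τ. -/
def act {b n : ℕ} {lam : Fin b → YoungDiagram} (w : Equiv.Perm (Fin n))
    (T : MPTableau b n lam) : MPTableau b n lam :=
  (w⁻¹ : Equiv.Perm (Fin n)).trans T

/-- w ∈ W^α: the restriction of w to each block M_j is increasing. -/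
def Wincr {b : ℕ} (n : ℕ) (lam : Fin b → YoungDiagram) (w : Equiv.Perm (Fin n)) : Prop :=
  ∀ (j : Fin b) (i i' : Fin n),
    (psum lam j ≤ (i : ℕ) ∧ (i : ℕ) < psum lam j + (lam j).card) →
    (psum lam j ≤ (i' : ℕ) ∧ (i' : ℕ) < psum lam j + (lam j).card) →
    i < i' → w i < w i'


abbrev MP (b : ℕ) := Fin b → YoungDiagram

def msize {b : ℕ} (lam : MP b) : ℕ := ∑ j, (lam j).card

def Cov {b : ℕ} (mu lam : MP b) : Prop :=
  (∀ j, mu j ≤ lam j) ∧ msize mu + 1 = msize lam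

namespace MPdev

variable {b : ℕ}

theorem card_le_of_le {μ ν : YoungDiagram} (h : μ ≤ ν) : μ.card ≤ ν.card :=
  Finset.card_le_card h

theorem msize_le {mu lam : MP b} (h : ∀ j, mu j ≤ lam j) : msize mu ≤ msize lam :=
  Finset.sum_le_sum fun j _ => card_le_of_le (h j)

theorem eq_of_le_of_msize_le {mu lam : MP b} (h : ∀ j, mu j ≤ lam j)
    (h2 : msize lam ≤ msize mu) : mu = lam := by
  have hle : ∀ j ∈ Finset.univ, (mu j).card ≤ (lam j).card := fun j _ => card_le_of_le (h j)
  have hsum : ∑ j, (mu j).card = ∑ j, (lam j).card :=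
    le_antisymm (Finset.sum_le_sum hle) h2
  have := (Finset.sum_eq_sum_iff_of_le hle).mp hsum
  funext j
  exact YoungDiagram.ext (Finset.eq_of_subset_of_card_le (h j) (le_of_eq (this j (Finset.mem_univ j)).symm))

theorem cell_bound {μ : YoungDiagram} {c : ℕ × ℕ} (hc : c ∈ μ) :
    c.1 < μ.card ∧ c.2 < μ.card := by
  constructor
  · have hsub : (Finset.range (c.1 + 1)).image (fun k => (k, c.2)) ⊆ μ.cells := by
      intro x hx
      simp only [Finset.mem_image, Finset.mem_range] at hx
      obtain ⟨k, hk, rfl⟩ := hx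
      exact μ.up_left_mem (Nat.lt_succ_iff.mp hk) le_rfl (by simpa using hc)
    have := Finset.card_le_card hsub
    rwa [Finset.card_image_of_injective _ (fun a a' h => by simpa using congrArg Prod.fst h),
      Finset.card_range, Nat.succ_le_iff] at this
  · have hsub : (Finset.range (c.2 + 1)).image (fun k => (c.1, k)) ⊆ μ.cells := by
      intro x hx
      simp only [Finset.mem_image, Finset.mem_range] at hx
      obtain ⟨k, hk, rfl⟩ := hx
      exact μ.up_left_mem le_rfl (Nat.lt_succ_iff.mp hk) (by simpa using hc)
    have := Finset.card_le_card hsub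
    rwa [Finset.card_image_of_injective _ (fun a a' h => by simpa using congrArg Prod.snd h),
      Finset.card_range, Nat.succ_le_iff] at this

theorem card_le_msize (lam : MP b) (j : Fin b) : (lam j).card ≤ msize lam :=
  Finset.single_le_sum (f := fun j => (lam j).card) (fun _ _ => Nat.zero_le _) (Finset.mem_univ j)

instance finite_msize_eq (n : ℕ) : Finite {lam : MP b // msize lam = n} := by
  let f : {lam : MP b // msize lam = n} →
      (∀ _ : Fin b, ((Finset.range n ×ˢ Finset.range n).powerset : Finset (Finset (ℕ × ℕ)))) :=
    fun lam j => ⟨(lam.1 j).cells, by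
      rw [Finset.mem_powerset]
      intro c hc
      have hb := cell_bound (μ := lam.1 j) (by simpa using hc)
      have hle := card_le_msize lam.1 j
      rw [lam.2] at hle
      simp only [Finset.mem_product, Finset.mem_range]
      exact ⟨lt_of_lt_of_le hb.1 hle, lt_of_lt_of_le hb.2 hle⟩⟩
  have hf : Function.Injective f := by
    intro x y h
    apply Subtype.ext
    funext j
    have := congrFun h j
    exact YoungDiagram.ext (by simpa [f, Subtype.ext_iff] using this)
  exact Finite.of_injective f hf

instance finite_cocov (lam : MP b) : Finite {mu : MP b // Cov mu lam} := by
  let f : {mu : MP b // Cov mu lam} → {mu : MP b // msize mu = msize lam - 1} :=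
    fun mu => ⟨mu.1, by have := mu.2.2; omega⟩
  exact Finite.of_injective f fun x y h => Subtype.ext (by simpa [f, Subtype.ext_iff] using h)

instance finite_cov (lam : MP b) : Finite {nu : MP b // Cov lam nu} := by
  let f : {nu : MP b // Cov lam nu} → {nu : MP b // msize nu = msize lam + 1} :=
    fun nu => ⟨nu.1, by have := nu.2.2; omega⟩
  exact Finite.of_injective f fun x y h => Subtype.ext (by simpa [f, Subtype.ext_iff] using h)



/-- Single-diagram cover decomposition. -/
theorem ydiff_exists {μ ν : YoungDiagram} (hle : μ ≤ ν) (hcard : μ.card + 1 = ν.card) :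
    ∃ c₀, c₀ ∉ μ ∧ ν.cells = insert c₀ μ.cells := by
  have hsub : μ.cells ⊆ ν.cells := hle
  have h1 : (ν.cells \ μ.cells).card = 1 := by
    rw [Finset.card_sdiff_of_subset hsub]
    show ν.card - μ.card = 1
    omega
  obtain ⟨c₀, hc₀⟩ := Finset.card_eq_one.mp h1
  refine ⟨c₀, ?_, ?_⟩
  · have : c₀ ∈ ν.cells \ μ.cells := hc₀ ▸ Finset.mem_singleton_self c₀
    exact (Finset.mem_sdiff.mp this).2
  · rw [← Finset.union_sdiff_of_subset hsub, hc₀, Finset.union_comm]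
    rw [Finset.insert_eq]

theorem mem_of_insert_cover {μ ν : YoungDiagram} {c₀ x : ℕ × ℕ}
    (h : ν.cells = insert c₀ μ.cells) (hx : x ∈ ν) (hxμ : x ∉ μ) : x = c₀ := by
  have : x ∈ ν.cells := hx
  rw [h, Finset.mem_insert] at this
  tauto

/-- Addable rows. -/
def Addable (μ : YoungDiagram) (i : ℕ) : Prop :=
  i = 0 ∨ μ.rowLen i < μ.rowLen (i - 1)

/-- Removable rows. -/
def Removable (μ : YoungDiagram) (i : ℕ) : Prop :=
  μ.rowLen (i + 1) < μ.rowLen i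

/-- Add a cell at the end of an addable row. -/
def addCell (μ : YoungDiagram) (i : ℕ) (h : Addable μ i) : YoungDiagram where
  cells := insert (i, μ.rowLen i) μ.cells
  isLowerSet := by
    intro hi lo hle hmem
    simp only [Finset.coe_insert, Set.mem_insert_iff, Finset.mem_coe] at hmem ⊢
    obtain ⟨x1, x2⟩ := lo
    obtain ⟨y1, y2⟩ := hi
    have h1 : x1 ≤ y1 := hle.1
    have h2 : x2 ≤ y2 := hle.2
    rcases hmem with hy | hy
    · have hy1 : y1 = i := (Prod.mk.injEq .. ▸ hy).1
      have hy2 : y2 = μ.rowLen i := (Prod.mk.injEq .. ▸ hy).2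
      subst hy1; subst hy2
      rcases Nat.lt_or_ge x2 (μ.rowLen y1) with h2' | h2'
      · right
        rw [YoungDiagram.mem_cells, YoungDiagram.mem_iff_lt_rowLen]
        exact lt_of_lt_of_le h2' (μ.rowLen_anti _ _ h1)
      · have hx2 : x2 = μ.rowLen y1 := le_antisymm (le_trans h2 le_rfl) h2'
        rcases Nat.eq_or_lt_of_le h1 with h1e | h1'
        · left; rw [hx2, h1e]
        · right
          rcases h with rfl | h
          · omega
          · rw [YoungDiagram.mem_cells, YoungDiagram.mem_iff_lt_rowLen, hx2]
            have : x1 ≤ y1 - 1 := by omega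
            exact lt_of_lt_of_le h (μ.rowLen_anti _ _ this)
    · right
      exact μ.isLowerSet (show ((x1,x2) : ℕ × ℕ) ≤ (y1,y2) from hle) hy

theorem corner_not_mem (μ : YoungDiagram) (i : ℕ) : (i, μ.rowLen i) ∉ μ := by
  rw [YoungDiagram.mem_iff_lt_rowLen]; omega

theorem addCell_le (μ : YoungDiagram) (i : ℕ) (h : Addable μ i) : μ ≤ addCell μ i h := by
  intro x hx
  simp only [addCell, SetLike.mem_coe, YoungDiagram.mem_mk, Finset.mem_insert]
  exact Finset.mem_insert_of_mem hx

theorem addCell_card (μ : YoungDiagram) (i : ℕ) (h : Addable μ i) :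
    (addCell μ i h).card = μ.card + 1 := by
  simp only [addCell, YoungDiagram.card]
  rw [Finset.card_insert_of_notMem (corner_not_mem μ i)]

/-- Maximal cell: can be erased. -/
def eraseCell (μ : YoungDiagram) (c : ℕ × ℕ)
    (hmax : ∀ c' ∈ μ, c ≤ c' → c' = c) : YoungDiagram where
  cells := μ.cells.erase c
  isLowerSet := by
    intro hi lo hle hmem
    simp only [Finset.coe_erase, Set.mem_diff, Set.mem_singleton_iff, Finset.mem_coe] at hmem ⊢
    obtain ⟨hy1, hy2⟩ := hmem
    have hy1' : hi ∈ μ := hy1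
    refine ⟨μ.isLowerSet hle hy1', ?_⟩
    rintro rfl
    exact hy2 (hmax hi hy1' hle)

theorem eraseCell_le (μ : YoungDiagram) (c : ℕ × ℕ) (hmax) : eraseCell μ c hmax ≤ μ := by
  intro x hx
  exact Finset.mem_of_mem_erase hx

theorem eraseCell_card (μ : YoungDiagram) (c : ℕ × ℕ) (hc : c ∈ μ) (hmax) :
    (eraseCell μ c hmax).card + 1 = μ.card := by
  simp only [eraseCell, YoungDiagram.card]
  rw [Finset.card_erase_of_mem hc]
  have : 0 < μ.cells.card := Finset.card_pos.mpr ⟨c, hc⟩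
  omega

theorem removable_corner_mem {μ : YoungDiagram} {i : ℕ} (h : Removable μ i) :
    (i, μ.rowLen i - 1) ∈ μ := by
  rw [YoungDiagram.mem_iff_lt_rowLen]
  have : 0 < μ.rowLen i := by unfold Removable at h; omega
  omega

theorem removable_corner_max {μ : YoungDiagram} {i : ℕ} (h : Removable μ i) :
    ∀ c' ∈ μ, (i, μ.rowLen i - 1) ≤ c' → c' = (i, μ.rowLen i - 1) := by
  rintro ⟨a, c⟩ hmem hle
  have h1 : i ≤ a := hle.1
  have h2 : μ.rowLen i - 1 ≤ c := hle.2
  have hpos : 0 < μ.rowLen i := by unfold Removable at h; omega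
  have hlt : c < μ.rowLen a := YoungDiagram.mem_iff_lt_rowLen.mp hmem
  have hanti : μ.rowLen a ≤ μ.rowLen i := μ.rowLen_anti _ _ h1
  have ha : a = i := by
    by_contra hne
    have : i + 1 ≤ a := by omega
    have := μ.rowLen_anti _ _ this
    unfold Removable at h
    omega
  subst ha
  have : c = μ.rowLen a - 1 := by omega
  simp [this]


def YCov (μ : YoungDiagram) := {ν : YoungDiagram // μ ≤ ν ∧ μ.card + 1 = ν.card}

def YCocov (μ : YoungDiagram) := {ρ : YoungDiagram // ρ ≤ μ ∧ ρ.card + 1 = μ.card}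

theorem insert_injective_cell {μ : YoungDiagram} {c c' : ℕ × ℕ} (hc : c ∉ μ.cells)
    (h : insert c μ.cells = insert c' μ.cells) : c = c' := by
  have : c ∈ insert c' μ.cells := h ▸ Finset.mem_insert_self c μ.cells
  rcases Finset.mem_insert.mp this with h1 | h1
  · exact h1
  · exact absurd h1 hc

noncomputable def ycovEquiv (μ : YoungDiagram) : {i : ℕ // Addable μ i} ≃ YCov μ := by
  apply Equiv.ofBijective
    (fun p => (⟨addCell μ p.1 p.2, addCell_le μ p.1 p.2, (addCell_card μ p.1 p.2).symm⟩ : YCov μ))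
  constructor
  · rintro ⟨i, h⟩ ⟨i', h'⟩ heq
    simp only [Subtype.mk.injEq] at heq ⊢
    have hcells : insert (i, μ.rowLen i) μ.cells = insert (i', μ.rowLen i') μ.cells :=
      congrArg YoungDiagram.cells heq
    have := insert_injective_cell (by simpa using corner_not_mem μ i) hcells
    exact (Prod.mk.injEq .. ▸ this).1
  · rintro ⟨ν, hle, hcard⟩
    obtain ⟨c₀, hc₀, hcells⟩ := ydiff_exists hle hcard
    obtain ⟨i, r⟩ := c₀
    have hc₀ν : (i, r) ∈ ν := by rw [← YoungDiagram.mem_cells, hcells]; exact Finset.mem_insert_self _ _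
    have hge : μ.rowLen i ≤ r := by
      by_contra hlt
      exact hc₀ (YoungDiagram.mem_iff_lt_rowLen.mpr (by omega))
    have hr : r = μ.rowLen i := by
      by_contra hne
      have hx : (i, μ.rowLen i) ∈ ν := ν.up_left_mem le_rfl hge hc₀ν
      have := mem_of_insert_cover hcells hx (corner_not_mem μ i)
      have : μ.rowLen i = r := (Prod.mk.injEq .. ▸ this).2
      omega
    subst hr
    have hadd : Addable μ i := by
      rcases Nat.eq_zero_or_pos i with rfl | hi
      · exact Or.inl rfl
      · right
        have hx : (i - 1, μ.rowLen i) ∈ ν := ν.up_left_mem (by omega) le_rfl hc₀ν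
        have hxne : ((i - 1, μ.rowLen i) : ℕ × ℕ) ≠ (i, μ.rowLen i) := by
          simp only [ne_eq, Prod.mk.injEq]
          omega
        have hxμ : (i - 1, μ.rowLen i) ∈ μ := by
          have : (i - 1, μ.rowLen i) ∈ ν.cells := hx
          rw [hcells] at this
          rcases Finset.mem_insert.mp this with h1 | h1
          · exact absurd h1 hxne
          · exact h1
        exact YoungDiagram.mem_iff_lt_rowLen.mp hxμ
    refine ⟨⟨i, hadd⟩, ?_⟩
    apply Subtype.ext
    apply YoungDiagram.ext
    show insert (i, μ.rowLen i) μ.cells = ν.cells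
    rw [hcells]

set_option maxHeartbeats 1000000 in
noncomputable def ycocovEquiv (μ : YoungDiagram) : {i : ℕ // Removable μ i} ≃ YCocov μ := by
  apply Equiv.ofBijective
    (fun p => (⟨eraseCell μ (p.1, μ.rowLen p.1 - 1) (removable_corner_max p.2),
      eraseCell_le μ (p.1, μ.rowLen p.1 - 1) (removable_corner_max p.2),
      eraseCell_card μ (p.1, μ.rowLen p.1 - 1) (removable_corner_mem p.2)
        (removable_corner_max p.2)⟩ : YCocov μ))
  constructor
  · rintro ⟨i, h⟩ ⟨i', h'⟩ heq
    simp only [Subtype.mk.injEq] at heq ⊢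
    have hcells : μ.cells.erase (i, μ.rowLen i - 1) = μ.cells.erase (i', μ.rowLen i' - 1) :=
      congrArg YoungDiagram.cells heq
    have hmem : ((i, μ.rowLen i - 1) : ℕ × ℕ) ∈ μ.cells := removable_corner_mem h
    by_contra hne
    have h1 : ((i, μ.rowLen i - 1) : ℕ × ℕ) ∈ μ.cells.erase (i', μ.rowLen i' - 1) :=
      Finset.mem_erase.mpr ⟨by
        simp only [ne_eq, Prod.mk.injEq, not_and]
        intro hii _
        exact hne hii, hmem⟩
    rw [← hcells] at h1
    exact (Finset.mem_erase.mp h1).1 rfl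
  · rintro ⟨ρ, hle, hcard⟩
    obtain ⟨c₀, hc₀, hcells⟩ := ydiff_exists hle hcard
    obtain ⟨i, r⟩ := c₀
    have hc₀μ : (i, r) ∈ μ := by rw [← YoungDiagram.mem_cells, hcells]; exact Finset.mem_insert_self _ _
    have hrlt : r < μ.rowLen i := YoungDiagram.mem_iff_lt_rowLen.mp hc₀μ
    have hr : r = μ.rowLen i - 1 := by
      by_contra hne
      have hx : (i, r + 1) ∈ μ := YoungDiagram.mem_iff_lt_rowLen.mpr (by omega)
      have hxρ : (i, r + 1) ∈ ρ := by
        have : (i, r + 1) ∈ μ.cells := hx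
        rw [hcells] at this
        rcases Finset.mem_insert.mp this with h1 | h1
        · exact absurd ((Prod.mk.injEq .. ▸ h1).2) (by omega)
        · exact h1
      exact hc₀ (ρ.up_left_mem le_rfl (by omega) hxρ)
    have hrem : Removable μ i := by
      unfold Removable
      by_contra hge
      have heq : μ.rowLen (i + 1) = μ.rowLen i := le_antisymm (μ.rowLen_anti _ _ (by omega)) (by omega)
      have hx : (i + 1, r) ∈ μ := YoungDiagram.mem_iff_lt_rowLen.mpr (by omega)
      have hxρ : (i + 1, r) ∈ ρ := by
        have : (i + 1, r) ∈ μ.cells := hx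
        rw [hcells] at this
        rcases Finset.mem_insert.mp this with h1 | h1
        · exact absurd ((Prod.mk.injEq .. ▸ h1).1) (by omega)
        · exact h1
      exact hc₀ (ρ.up_left_mem (by omega) le_rfl hxρ)
    refine ⟨⟨i, hrem⟩, ?_⟩
    apply Subtype.ext
    apply YoungDiagram.ext
    show μ.cells.erase (i, μ.rowLen i - 1) = ρ.cells
    rw [hcells, ← hr, Finset.erase_insert (by simpa using hc₀)]

instance finite_addable (μ : YoungDiagram) : Finite {i : ℕ // Addable μ i} := by
  let f : {i : ℕ // Addable μ i} → Fin (μ.card + 1) := fun p => ⟨p.1, by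
    rcases p.2 with h | h
    · omega
    · have : (p.1 - 1, 0) ∈ μ := YoungDiagram.mem_iff_lt_rowLen.mpr (by omega)
      have := (cell_bound this).1
      simp only at this
      omega⟩
  exact Finite.of_injective f fun x y h => Subtype.ext (by simpa [f, Fin.ext_iff] using h)

instance finite_removable (μ : YoungDiagram) : Finite {i : ℕ // Removable μ i} := by
  let f : {i : ℕ // Removable μ i} → Fin (μ.card + 1) := fun p => ⟨p.1, by
    have hp := p.2
    unfold Removable at hp
    have : (p.1, 0) ∈ μ := YoungDiagram.mem_iff_lt_rowLen.mpr (by omega)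
    have := (cell_bound this).1
    omega⟩
  exact Finite.of_injective f fun x y h => Subtype.ext (by simpa [f, Fin.ext_iff] using h)

noncomputable def addableEquivOption (μ : YoungDiagram) :
    Option {i : ℕ // Removable μ i} ≃ {i : ℕ // Addable μ i} := by
  apply Equiv.ofBijective (fun o => match o with
    | none => (⟨0, Or.inl rfl⟩ : {i : ℕ // Addable μ i})
    | some p => ⟨p.1 + 1, Or.inr (by simpa [Removable] using p.2)⟩)
  constructor
  · rintro (_ | ⟨i, h⟩) (_ | ⟨i', h'⟩) heq
    · rfl
    · exact absurd (congrArg Subtype.val heq) (by simp)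
    · exact absurd (congrArg Subtype.val heq) (by simp)
    · have hv : i = i' := by
        have := congrArg Subtype.val heq
        simpa using this
      subst hv
      rfl
  · rintro ⟨i, h⟩
    match i, h with
    | 0, _ => exact ⟨none, rfl⟩
    | (k+1), h =>
      refine ⟨some ⟨k, ?_⟩, rfl⟩
      rcases h with h | h
      · omega
      · simpa [Removable] using h

instance finite_ycov (μ : YoungDiagram) : Finite (YCov μ) := Finite.of_equiv _ (ycovEquiv μ)
instance finite_ycocov (μ : YoungDiagram) : Finite (YCocov μ) := Finite.of_equiv _ (ycocovEquiv μ)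

theorem ycorner (μ : YoungDiagram) : Nat.card (YCov μ) = Nat.card (YCocov μ) + 1 := by
  rw [← Nat.card_congr (ycovEquiv μ), ← Nat.card_congr (ycocovEquiv μ),
    ← Nat.card_congr (addableEquivOption μ)]
  have : Fintype {i : ℕ // Removable μ i} := Fintype.ofFinite _
  simp [Nat.card_eq_fintype_card]


variable {b : ℕ}

theorem cov_exists {mu lam : MP b} (h : Cov mu lam) :
    ∃ j₀ : Fin b, (∀ j, j ≠ j₀ → mu j = lam j) ∧ mu j₀ ≤ lam j₀ ∧
      (mu j₀).card + 1 = (lam j₀).card := by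
  obtain ⟨hle, hsz⟩ := h
  have hcle : ∀ j, (mu j).card ≤ (lam j).card := fun j => card_le_of_le (hle j)
  set d : Fin b → ℕ := fun j => (lam j).card - (mu j).card with hd
  have hsum : ∑ j, d j = 1 := by
    have h1 : ∑ j, ((mu j).card + d j) = ∑ j, (lam j).card := by
      apply Finset.sum_congr rfl
      intro j _
      have := hcle j
      simp only [hd]
      omega
    rw [Finset.sum_add_distrib] at h1
    unfold msize at hsz
    omega
  have hex : ∃ j₀, d j₀ ≠ 0 := by
    by_contra hno
    push_neg at hno
    rw [Finset.sum_eq_zero (fun j _ => hno j)] at hsum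
    omega
  obtain ⟨j₀, hj₀⟩ := hex
  have hsplit := Finset.add_sum_erase Finset.univ d (Finset.mem_univ j₀)
  have hd₀ : d j₀ = 1 ∧ ∑ j ∈ Finset.univ.erase j₀, d j = 0 := by
    have h1 := hsplit
    omega
  have hrest : ∀ j, j ≠ j₀ → d j = 0 := by
    intro j hj
    exact (Finset.sum_eq_zero_iff).mp hd₀.2 j (Finset.mem_erase.mpr ⟨hj, Finset.mem_univ j⟩)
  refine ⟨j₀, ?_, hle j₀, ?_⟩
  · intro j hj
    have : (lam j).card ≤ (mu j).card := by have := hrest j hj; have := hcle j; simp only [hd] at *; omega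
    exact YoungDiagram.ext (Finset.eq_of_subset_of_card_le (hle j) this)
  · have := hd₀.1
    have := hcle j₀
    simp only [hd] at *
    omega

theorem msize_update (M : MP b) (j : Fin b) (ν : YoungDiagram) :
    msize (Function.update M j ν) + (M j).card = msize M + ν.card := by
  unfold msize
  have key : ∀ j', (Function.update M j ν j').card =
      Function.update (fun j'' => (M j'').card) j ν.card j' := by
    intro j'
    rcases eq_or_ne j' j with rfl | hne
    · simp
    · rw [Function.update_of_ne hne, Function.update_of_ne hne]
  rw [Finset.sum_congr rfl (fun j' _ => key j'),
    Finset.sum_update_of_mem (Finset.mem_univ j)]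
  have h2 := Finset.add_sum_erase Finset.univ (fun j' => (M j').card) (Finset.mem_univ j)
  rw [Finset.erase_eq] at h2
  beta_reduce at h2 ⊢
  omega

theorem update_le {M : MP b} {j : Fin b} {ν : YoungDiagram} (h : M j ≤ ν) :
    ∀ j', M j' ≤ Function.update M j ν j' := by
  intro j'
  rcases eq_or_ne j' j with rfl | hne
  · simpa using h
  · rw [Function.update_of_ne hne]

theorem le_update {M : MP b} {j : Fin b} {ν : YoungDiagram} (h : ν ≤ M j) :
    ∀ j', Function.update M j ν j' ≤ M j' := by
  intro j'
  rcases eq_or_ne j' j with rfl | hne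
  · simpa using h
  · rw [Function.update_of_ne hne]

noncomputable def covEquiv (M : MP b) : (Σ j : Fin b, YCov (M j)) ≃ {Λ : MP b // Cov M Λ} := by
  apply Equiv.ofBijective (fun p => ⟨Function.update M p.1 p.2.1, update_le p.2.2.1, by
    have h1 := msize_update M p.1 p.2.1
    have h2 := p.2.2.2
    omega⟩)
  constructor
  · rintro ⟨j, ν, hν⟩ ⟨j', ν', hν'⟩ heq
    have hval : Function.update M j ν = Function.update M j' ν' :=
      congrArg Subtype.val heq
    have hjj : j = j' := by
      by_contra hne
      have h1 := congrFun hval j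
      rw [Function.update_self, Function.update_of_ne hne] at h1
      have := hν.2
      rw [h1] at this
      omega
    subst hjj
    have : ν = ν' := by
      have h1 := congrFun hval j
      rwa [Function.update_self, Function.update_self] at h1
    subst this
    rfl
  · rintro ⟨Λ, hcov⟩
    obtain ⟨j₀, hothers, hle₀, hcard₀⟩ := cov_exists hcov
    refine ⟨⟨j₀, ⟨Λ j₀, hle₀, hcard₀⟩⟩, Subtype.ext ?_⟩
    funext j
    show Function.update M j₀ (Λ j₀) j = Λ j
    rcases eq_or_ne j j₀ with rfl | hne
    · simp
    · rw [Function.update_of_ne hne]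
      exact hothers j hne

noncomputable def cocovEquiv (M : MP b) : (Σ j : Fin b, YCocov (M j)) ≃ {mu : MP b // Cov mu M} := by
  apply Equiv.ofBijective (fun p => ⟨Function.update M p.1 p.2.1, le_update p.2.2.1, by
    have h1 := msize_update M p.1 p.2.1
    have h2 := p.2.2.2
    omega⟩)
  constructor
  · rintro ⟨j, ν, hν⟩ ⟨j', ν', hν'⟩ heq
    have hval : Function.update M j ν = Function.update M j' ν' :=
      congrArg Subtype.val heq
    have hjj : j = j' := by
      by_contra hne
      have h1 := congrFun hval j
      rw [Function.update_self, Function.update_of_ne hne] at h1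
      have := hν.2
      rw [h1] at this
      omega
    subst hjj
    have : ν = ν' := by
      have h1 := congrFun hval j
      rwa [Function.update_self, Function.update_self] at h1
    subst this
    rfl
  · rintro ⟨mu, hcov⟩
    obtain ⟨j₀, hothers, hle₀, hcard₀⟩ := cov_exists hcov
    refine ⟨⟨j₀, ⟨mu j₀, hle₀, hcard₀⟩⟩, Subtype.ext ?_⟩
    funext j
    show Function.update M j₀ (mu j₀) j = mu j
    rcases eq_or_ne j j₀ with rfl | hne
    · simp
    · rw [Function.update_of_ne hne]
      exact (hothers j hne).symm

theorem corner_mp (M : MP b) :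
    Nat.card {Λ : MP b // Cov M Λ} = Nat.card {mu : MP b // Cov mu M} + b := by
  rw [← Nat.card_congr (covEquiv M), ← Nat.card_congr (cocovEquiv M)]
  have h1 : ∀ j : Fin b, Fintype (YCov (M j)) := fun j => Fintype.ofFinite _
  have h2 : ∀ j : Fin b, Fintype (YCocov (M j)) := fun j => Fintype.ofFinite _
  rw [Nat.card_eq_fintype_card, Nat.card_eq_fintype_card]
  rw [Fintype.card_sigma, Fintype.card_sigma]
  have : ∀ j : Fin b, Fintype.card (YCov (M j)) = Fintype.card (YCocov (M j)) + 1 := by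
    intro j
    have := ycorner (M j)
    rwa [Nat.card_eq_fintype_card, Nat.card_eq_fintype_card] at this
  rw [Finset.sum_congr rfl (fun j _ => this j), Finset.sum_add_distrib]
  simp


/-! ## Branching -/

abbrev Cells (lam : MP b) := (j : Fin b) × {c : ℕ × ℕ // c ∈ lam j}

instance (μ : YoungDiagram) : Fintype {c : ℕ × ℕ // c ∈ μ} :=
  Fintype.ofFinset μ.cells (by simp)

theorem cells_ext {lam : MP b} {p q : Cells lam} (h1 : p.1 = q.1) (h2 : p.2.1 = q.2.1) :
    p = q := by
  obtain ⟨j, c⟩ := p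
  obtain ⟨j', c'⟩ := q
  dsimp only at h1
  subst h1
  exact congrArg (Sigma.mk j) (Subtype.ext h2)

theorem cells_eq_imp {lam : MP b} {p q : Cells lam} (h : p = q) :
    p.1 = q.1 ∧ p.2.1 = q.2.1 := by subst h; exact ⟨rfl, rfl⟩

theorem mem_of_le {μ ν : YoungDiagram} (h : μ ≤ ν) {c : ℕ × ℕ} (hc : c ∈ μ) : c ∈ ν := h hc

def cellV {mu lam : MP b} (h : ∀ j, mu j ≤ lam j) (p : Cells mu) : Cells lam :=
  ⟨p.1, ⟨p.2.1, mem_of_le (h p.1) p.2.2⟩⟩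

theorem cellV_fst {mu lam : MP b} (h : ∀ j, mu j ≤ lam j) (p : Cells mu) :
    (cellV h p).1 = p.1 := rfl

theorem cellV_val {mu lam : MP b} (h : ∀ j, mu j ≤ lam j) (p : Cells mu) :
    (cellV h p).2.1 = p.2.1 := rfl

theorem cellV_inj {mu lam : MP b} (h : ∀ j, mu j ≤ lam j) :
    Function.Injective (cellV h) := by
  intro p q hpq
  obtain ⟨h1, h2⟩ := cells_eq_imp hpq
  exact cells_ext h1 h2

/-- The entry `n+1` of a standard tableau sits in a maximal cell. -/
theorem last_max {lam : MP b} {n : ℕ} {T : MPTableau b (n+1) lam} (hT : IsStandard T) :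
    ∀ c' ∈ lam (T (Fin.last n)).1, (T (Fin.last n)).2.1 ≤ c' → c' = (T (Fin.last n)).2.1 := by
  intro c' hmem hle
  by_contra hne
  have hne' : (T (Fin.last n)).2 ≠ (⟨c', hmem⟩ : {c // c ∈ lam (T (Fin.last n)).1}) :=
    fun he => hne (congrArg Subtype.val he).symm
  have hlt := hT (T (Fin.last n)).1 (T (Fin.last n)).2 ⟨c', hmem⟩ hle.1 hle.2 hne'
  have : T.symm ⟨(T (Fin.last n)).1, (T (Fin.last n)).2⟩ = Fin.last n := by
    have : (⟨(T (Fin.last n)).1, (T (Fin.last n)).2⟩ : Cells lam) = T (Fin.last n) := rfl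
    rw [this, Equiv.symm_apply_apply]
  rw [this] at hlt
  exact absurd hlt (not_lt.mpr (Fin.le_last _))

/-- Erase a maximal cell from a multipartition. -/
def mpEraseP (lam : MP b) (p : Cells lam)
    (hmax : ∀ c' ∈ lam p.1, p.2.1 ≤ c' → c' = p.2.1) : MP b :=
  Function.update lam p.1 (eraseCell (lam p.1) p.2.1 hmax)

theorem mem_mpEraseP {lam : MP b} {p : Cells lam} {hmax} {j : Fin b} {c : ℕ × ℕ} :
    c ∈ mpEraseP lam p hmax j ↔ c ∈ lam j ∧ ¬(j = p.1 ∧ c = p.2.1) := by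
  unfold mpEraseP
  rcases eq_or_ne j p.1 with rfl | hne
  · rw [Function.update_self]
    show c ∈ (lam p.1).cells.erase p.2.1 ↔ _
    rw [Finset.mem_erase]
    constructor
    · rintro ⟨h1, h2⟩
      exact ⟨h2, fun hc => h1 hc.2⟩
    · rintro ⟨h1, h2⟩
      exact ⟨fun hc => h2 ⟨rfl, hc⟩, h1⟩
  · rw [Function.update_of_ne hne]
    constructor
    · intro h1
      exact ⟨h1, fun hc => hne hc.1⟩
    · exact fun h => h.1

theorem cov_mpEraseP (lam : MP b) (p : Cells lam) (hmax) :
    Cov (mpEraseP lam p hmax) lam := by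
  constructor
  · exact le_update (eraseCell_le _ _ _)
  · have h1 := msize_update lam p.1 (eraseCell (lam p.1) p.2.1 hmax)
    have h2 := eraseCell_card (lam p.1) p.2.1 p.2.2 hmax
    unfold mpEraseP
    omega

theorem mpEraseP_self_not_mem (lam : MP b) (p : Cells lam) (hmax) :
    p.2.1 ∉ mpEraseP lam p hmax p.1 := by
  rw [mem_mpEraseP]
  tauto

theorem mpEraseP_inj {lam : MP b} {p q : Cells lam} {hp hq}
    (h : mpEraseP lam p hp = mpEraseP lam q hq) : p = q := by
  have h1 : p.2.1 ∉ mpEraseP lam q hq p.1 := by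
    rw [← h]; exact mpEraseP_self_not_mem lam p hp
  rw [mem_mpEraseP] at h1
  push_neg at h1
  obtain ⟨hj, hc⟩ := h1 p.2.2
  exact cells_ext hj hc

theorem mpEraseP_congr {lam : MP b} {p q : Cells lam} {hp hq} (h : p = q) :
    mpEraseP lam p hp = mpEraseP lam q hq := by
  subst h
  rfl

/-- The unique new cell of a covering. -/
theorem cov_cell {mu lam : MP b} (h : Cov mu lam) :
    ∃ p : Cells lam, p.2.1 ∉ mu p.1 ∧
      ∀ (j : Fin b) (c : ℕ × ℕ), c ∈ lam j → (c ∈ mu j ∨ (j = p.1 ∧ c = p.2.1)) := by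
  obtain ⟨j₀, hothers, hle₀, hcard₀⟩ := cov_exists h
  obtain ⟨c₀, hc₀, hcells⟩ := ydiff_exists hle₀ hcard₀
  have hc₀lam : c₀ ∈ lam j₀ := by
    rw [← YoungDiagram.mem_cells, hcells]; exact Finset.mem_insert_self _ _
  refine ⟨⟨j₀, ⟨c₀, hc₀lam⟩⟩, hc₀, ?_⟩
  intro j c hc
  rcases eq_or_ne j j₀ with rfl | hne
  · have : c ∈ (lam j).cells := hc
    rw [hcells] at this
    rcases Finset.mem_insert.mp this with h1 | h1
    · exact Or.inr ⟨rfl, h1⟩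
    · exact Or.inl h1
  · left
    rw [hothers j hne]
    exact hc


/-! ## The fiber equivalence for branching -/

abbrev SYTt (n : ℕ) (lam : MP b) := {T : MPTableau b n lam // IsStandard T}

noncomputable instance (n : ℕ) (lam : MP b) : Fintype (SYTt n lam) := by
  classical
  exact Subtype.fintype _

def brmap (lam : MP b) (n : ℕ) (T : SYTt (n+1) lam) : {mu : MP b // Cov mu lam} :=
  ⟨mpEraseP lam (T.1 (Fin.last n)) (last_max T.2), cov_mpEraseP _ _ _⟩

section Fiber

variable {lam : MP b} {n : ℕ} (mu₀ : {mu : MP b // Cov mu lam})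

theorem hmu_of_fiber (X : {T : SYTt (n+1) lam // brmap lam n T = mu₀}) :
    mpEraseP lam (X.1.1 (Fin.last n)) (last_max X.1.2) = mu₀.1 :=
  congrArg Subtype.val X.2

def resFun (X : {T : SYTt (n+1) lam // brmap lam n T = mu₀}) (i : Fin n) : Cells mu₀.1 :=
  ⟨(X.1.1 i.castSucc).1, ⟨(X.1.1 i.castSucc).2.1, by
    rw [← hmu_of_fiber mu₀ X, mem_mpEraseP]
    refine ⟨(X.1.1 i.castSucc).2.2, ?_⟩
    rintro ⟨h1, h2⟩
    have heq : X.1.1 i.castSucc = X.1.1 (Fin.last n) := cells_ext h1 h2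
    exact absurd (X.1.1.injective heq) (Fin.castSucc_lt_last i).ne⟩⟩

theorem resFun_cellV (X : {T : SYTt (n+1) lam // brmap lam n T = mu₀}) (i : Fin n) :
    cellV mu₀.2.1 (resFun mu₀ X i) = X.1.1 i.castSucc := rfl

theorem resFun_bij (X : {T : SYTt (n+1) lam // brmap lam n T = mu₀}) :
    Function.Bijective (resFun mu₀ X) := by
  constructor
  · intro i i' h
    have h2 := congrArg (cellV mu₀.2.1) h
    rw [resFun_cellV, resFun_cellV] at h2
    exact Fin.castSucc_injective n (X.1.1.injective h2)
  · intro q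
    set i := X.1.1.symm (cellV mu₀.2.1 q) with hi
    have hne : i ≠ Fin.last n := by
      intro he
      have hlast : X.1.1 (Fin.last n) = cellV mu₀.2.1 q := by
        rw [← he, hi, Equiv.apply_symm_apply]
      have hnotmem : (X.1.1 (Fin.last n)).2.1 ∉ mu₀.1 (X.1.1 (Fin.last n)).1 := by
        rw [← hmu_of_fiber mu₀ X]
        exact mpEraseP_self_not_mem lam _ _
      obtain ⟨hf, hv⟩ := cells_eq_imp hlast
      apply hnotmem
      rw [hv, hf]
      exact q.2.2
    obtain ⟨i', hi'⟩ := Fin.exists_castSucc_eq.mpr hne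
    refine ⟨i', cellV_inj mu₀.2.1 ?_⟩
    rw [resFun_cellV, hi', hi, Equiv.apply_symm_apply]

noncomputable def resTabEquiv (X : {T : SYTt (n+1) lam // brmap lam n T = mu₀}) :
    MPTableau b n mu₀.1 :=
  Equiv.ofBijective (resFun mu₀ X) (resFun_bij mu₀ X)

theorem resTabEquiv_symm (X : {T : SYTt (n+1) lam // brmap lam n T = mu₀})
    (q : Cells mu₀.1) :
    Fin.castSucc ((resTabEquiv mu₀ X).symm q) = X.1.1.symm (cellV mu₀.2.1 q) := by
  apply X.1.1.injective
  rw [Equiv.apply_symm_apply]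
  rw [← resFun_cellV mu₀ X ((resTabEquiv mu₀ X).symm q)]
  exact congrArg (cellV mu₀.2.1) ((resTabEquiv mu₀ X).apply_symm_apply q)

theorem resTab_std (X : {T : SYTt (n+1) lam // brmap lam n T = mu₀}) :
    IsStandard (resTabEquiv mu₀ X) := by
  intro j c c' h1 h2 hne
  have hstd := X.1.2 j ⟨c.1, mem_of_le (mu₀.2.1 j) c.2⟩ ⟨c'.1, mem_of_le (mu₀.2.1 j) c'.2⟩
    h1 h2 (fun he => hne (Subtype.ext (show c.1 = c'.1 by
      have := congrArg (fun (x : {c : ℕ × ℕ // c ∈ lam j}) => x.1) he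
      simpa using this)))
  have e1 : (⟨j, ⟨c.1, mem_of_le (mu₀.2.1 j) c.2⟩⟩ : Cells lam) = cellV mu₀.2.1 ⟨j, c⟩ := rfl
  have e2 : (⟨j, ⟨c'.1, mem_of_le (mu₀.2.1 j) c'.2⟩⟩ : Cells lam) = cellV mu₀.2.1 ⟨j, c'⟩ := rfl
  rw [e1, e2, ← resTabEquiv_symm mu₀ X, ← resTabEquiv_symm mu₀ X] at hstd
  exact (Fin.castSucc_lt_castSucc_iff).mp hstd

noncomputable def resTab (X : {T : SYTt (n+1) lam // brmap lam n T = mu₀}) : SYTt n mu₀.1 :=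
  ⟨resTabEquiv mu₀ X, resTab_std mu₀ X⟩

theorem resTab_inj : Function.Injective (resTab (lam := lam) (n := n) mu₀) := by
  intro X X' h
  have hval : resTabEquiv mu₀ X = resTabEquiv mu₀ X' := congrArg Subtype.val h
  apply Subtype.ext
  apply Subtype.ext
  apply Equiv.ext
  intro i
  induction i using Fin.lastCases with
  | last =>
    have h1 := hmu_of_fiber mu₀ X
    have h2 := hmu_of_fiber mu₀ X'
    exact mpEraseP_inj (h1.trans h2.symm)
  | cast i =>
    have : resFun mu₀ X i = resFun mu₀ X' i := by
      have := congrArg (fun e => e i) (congrArg (fun (e : MPTableau b n mu₀.1) => (e : Fin n → Cells mu₀.1)) hval)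
      simpa [resTabEquiv] using this
    have h2 := congrArg (cellV mu₀.2.1) this
    rw [resFun_cellV, resFun_cellV] at h2
    exact h2

theorem resTab_surj : Function.Surjective (resTab (lam := lam) (n := n) mu₀) := by
  intro S
  obtain ⟨p₀, hp₀notmem, hp₀spec⟩ := cov_cell mu₀.2
  have hcovle := mu₀.2.1
  have hmax₀ : ∀ c' ∈ lam p₀.1, p₀.2.1 ≤ c' → c' = p₀.2.1 := by
    intro c' hm hle
    by_contra hne
    rcases hp₀spec p₀.1 c' hm with h | h
    · have : (p₀.2.1.1, p₀.2.1.2) ∈ mu₀.1 p₀.1 :=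
        (mu₀.1 p₀.1).up_left_mem hle.1 hle.2 (by simpa using h)
      exact hp₀notmem (by simpa using this)
    · exact hne h.2
  -- the extension function
  set g : Fin (n+1) → Cells lam :=
    Fin.lastCases p₀ (fun i => cellV hcovle (S.1 i)) with hg
  have hglast : g (Fin.last n) = p₀ := by simp [hg]
  have hgcast : ∀ i : Fin n, g i.castSucc = cellV hcovle (S.1 i) := by
    intro i; simp [hg]
  have hVne : ∀ y : Cells mu₀.1, cellV hcovle y ≠ p₀ := by
    intro y he
    obtain ⟨h1, h2⟩ := cells_eq_imp he
    rw [cellV_fst] at h1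
    rw [cellV_val] at h2
    apply hp₀notmem
    rw [← h2, ← h1]
    exact y.2.2
  have hgbij : Function.Bijective g := by
    constructor
    · intro i i' h
      induction i using Fin.lastCases with
      | last =>
        induction i' using Fin.lastCases with
        | last => rfl
        | cast i' =>
          rw [hglast, hgcast] at h
          exact absurd h.symm (hVne (S.1 i'))
      | cast i =>
        induction i' using Fin.lastCases with
        | last =>
          rw [hglast, hgcast] at h
          exact absurd h (hVne (S.1 i))
        | cast i' =>
          rw [hgcast, hgcast] at h
          rw [S.1.injective (cellV_inj hcovle h)]
    · intro q
      by_cases hq : q = p₀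
      · exact ⟨Fin.last n, by rw [hglast, hq]⟩
      · have hqmu : q.2.1 ∈ mu₀.1 q.1 := by
          rcases hp₀spec q.1 q.2.1 q.2.2 with h | h
          · exact h
          · exact absurd (cells_ext h.1 h.2) hq
        refine ⟨Fin.castSucc (S.1.symm ⟨q.1, ⟨q.2.1, hqmu⟩⟩), ?_⟩
        rw [hgcast, Equiv.apply_symm_apply]
        exact cells_ext rfl rfl
  set E : MPTableau b (n+1) lam := Equiv.ofBijective g hgbij with hE
  have hElast : E (Fin.last n) = p₀ := hglast
  have hEcast : ∀ i : Fin n, E i.castSucc = cellV hcovle (S.1 i) := hgcast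
  have hsymm₀ : E.symm p₀ = Fin.last n := by
    rw [Equiv.symm_apply_eq, hElast]
  have hsymmV : ∀ y : Cells mu₀.1, E.symm (cellV hcovle y) = Fin.castSucc (S.1.symm y) := by
    intro y
    rw [Equiv.symm_apply_eq, hEcast, Equiv.apply_symm_apply]
  have stdE : IsStandard E := by
    intro j c c' h1 h2 hne
    by_cases hc' : (⟨j, c'⟩ : Cells lam) = p₀
    · rw [hc', hsymm₀]
      have hcne : (⟨j, c⟩ : Cells lam) ≠ p₀ := by
        rw [← hc']
        intro he
        obtain ⟨_, h2v⟩ := cells_eq_imp he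
        exact hne (Subtype.ext h2v)
      have hcmu : c.1 ∈ mu₀.1 j := by
        rcases hp₀spec j c.1 c.2 with h | h
        · exact h
        · exact absurd (cells_ext h.1 h.2) hcne
      have : (⟨j, c⟩ : Cells lam) = cellV hcovle ⟨j, ⟨c.1, hcmu⟩⟩ := cells_ext rfl rfl
      rw [this, hsymmV]
      exact Fin.castSucc_lt_last _
    · have hc'mu : c'.1 ∈ mu₀.1 j := by
        rcases hp₀spec j c'.1 c'.2 with h | h
        · exact h
        · exact absurd (cells_ext h.1 h.2) hc'
      have hcmu : c.1 ∈ mu₀.1 j := by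
        rcases hp₀spec j c.1 c.2 with h | h
        · exact h
        · exfalso
          obtain ⟨hj, hcv⟩ := h
          subst hj
          have : c'.1 = p₀.2.1 := hmax₀ c'.1 c'.2 (by rw [← hcv]; exact ⟨h1, h2⟩)
          exact hne (Subtype.ext (by rw [hcv, this]))
      have e1 : (⟨j, c⟩ : Cells lam) = cellV hcovle ⟨j, ⟨c.1, hcmu⟩⟩ := cells_ext rfl rfl
      have e2 : (⟨j, c'⟩ : Cells lam) = cellV hcovle ⟨j, ⟨c'.1, hc'mu⟩⟩ := cells_ext rfl rfl
      rw [e1, e2, hsymmV, hsymmV, Fin.castSucc_lt_castSucc_iff]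
      exact S.2 j ⟨c.1, hcmu⟩ ⟨c'.1, hc'mu⟩ h1 h2
        (fun he => hne (Subtype.ext (show c.1 = c'.1 by
        have := congrArg (fun (x : {c : ℕ × ℕ // c ∈ mu₀.1 j}) => x.1) he
        simpa using this)))
  have hfib : brmap lam n ⟨E, stdE⟩ = mu₀ := by
    apply Subtype.ext
    show mpEraseP lam (E (Fin.last n)) (last_max stdE) = mu₀.1
    rw [mpEraseP_congr (hq := hmax₀) hElast]
    funext j
    apply YoungDiagram.ext
    apply Finset.ext
    intro x
    rw [YoungDiagram.mem_cells, YoungDiagram.mem_cells, mem_mpEraseP]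
    constructor
    · rintro ⟨hlam, hnot⟩
      rcases hp₀spec j x hlam with h | h
      · exact h
      · exact absurd h hnot
    · intro hx
      refine ⟨mem_of_le (hcovle j) hx, ?_⟩
      rintro ⟨hj, hcv⟩
      subst hj
      rw [hcv] at hx
      exact hp₀notmem hx
  refine ⟨⟨⟨E, stdE⟩, hfib⟩, ?_⟩
  apply Subtype.ext
  apply Equiv.ext
  intro i
  apply cells_ext
  · show (E i.castSucc).1 = (S.1 i).1
    rw [hEcast]
    rfl
  · show (E i.castSucc).2.1 = (S.1 i).2.1
    rw [hEcast]
    rfl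

noncomputable def fiberEquiv :
    {T : SYTt (n+1) lam // brmap lam n T = mu₀} ≃ SYTt n mu₀.1 :=
  Equiv.ofBijective (resTab (lam := lam) (n := n) mu₀) ⟨resTab_inj mu₀, resTab_surj mu₀⟩

end Fiber


/-! ## Counting -/

noncomputable instance (lam : MP b) : Fintype {mu : MP b // Cov mu lam} := Fintype.ofFinite _
noncomputable instance (lam : MP b) : Fintype {nu : MP b // Cov lam nu} := Fintype.ofFinite _
noncomputable instance (n : ℕ) : Fintype {lam : MP b // msize lam = n} := Fintype.ofFinite _

theorem branch_card (lam : MP b) (n : ℕ) :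
    Nat.card (SYTt (n+1) lam) = ∑ mu₀ : {mu : MP b // Cov mu lam}, Nat.card (SYTt n mu₀.1) := by
  classical
  calc Nat.card (SYTt (n+1) lam)
      = Nat.card (Σ mu₀ : {mu : MP b // Cov mu lam},
          {T : SYTt (n+1) lam // brmap lam n T = mu₀}) :=
        (Nat.card_congr (Equiv.sigmaFiberEquiv (brmap lam n))).symm
    _ = ∑ mu₀ : {mu : MP b // Cov mu lam}, Nat.card {T : SYTt (n+1) lam // brmap lam n T = mu₀} := by
        rw [Nat.card_eq_fintype_card, Fintype.card_sigma]
        apply Finset.sum_congr rfl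
        intro mu₀ _
        rw [Nat.card_eq_fintype_card]
    _ = ∑ mu₀ : {mu : MP b // Cov mu lam}, Nat.card (SYTt n mu₀.1) :=
        Finset.sum_congr rfl fun mu₀ _ => Nat.card_congr (fiberEquiv mu₀)

/-- The number of standard Young b-tableaux of shape `lam`. -/
noncomputable def t (lam : MP b) : ℕ := Nat.card (SYTt (msize lam) lam)

theorem t_card {lam : MP b} {n : ℕ} (h : msize lam = n) : Nat.card (SYTt n lam) = t lam := by
  subst h
  rfl

theorem t_bot {lam : MP b} (h : msize lam = 0) : t lam = 1 := by
  have h0 : ∀ j, (lam j).card = 0 := by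
    intro j
    have := Finset.sum_eq_zero_iff.mp (h : ∑ j, (lam j).card = 0)
    exact this j (Finset.mem_univ j)
  have hempty : IsEmpty (Cells lam) := by
    refine ⟨fun p => ?_⟩
    have hc : (lam p.1).cells = ∅ := Finset.card_eq_zero.mp (h0 p.1)
    have := p.2.2
    rw [← YoungDiagram.mem_cells, hc] at this
    exact absurd this (Finset.notMem_empty _)
  have hfin0 : IsEmpty (Fin (msize lam)) := by rw [h]; exact Fin.isEmpty
  let T₀ : MPTableau b (msize lam) lam := Equiv.equivOfIsEmpty _ _
  have std₀ : IsStandard T₀ := fun j c => (hempty.false ⟨j, c⟩).elim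
  have : Unique (SYTt (msize lam) lam) := by
    refine ⟨⟨⟨T₀, std₀⟩⟩, ?_⟩
    intro x
    apply Subtype.ext
    apply Equiv.ext
    intro i
    exact (hfin0.false i).elim
  unfold t
  simp [Nat.card_unique]

theorem branch_t (lam : MP b) (hpos : 0 < msize lam) :
    t lam = ∑ mu₀ : {mu : MP b // Cov mu lam}, t mu₀.1 := by
  obtain ⟨n, hn⟩ : ∃ n, msize lam = n + 1 := ⟨msize lam - 1, by omega⟩
  rw [← t_card hn, branch_card lam n]
  apply Finset.sum_congr rfl
  intro mu₀ _
  have : msize mu₀.1 = n := by have := mu₀.2.2; omega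
  rw [t_card this]

/-! ## Lattice structure on multipartitions -/

def msup (M N : MP b) : MP b := fun j => M j ⊔ N j
def minf (M N : MP b) : MP b := fun j => M j ⊓ N j

theorem msize_sup_add_inf (M N : MP b) :
    msize (msup M N) + msize (minf M N) = msize M + msize N := by
  unfold msize msup minf
  rw [← Finset.sum_add_distrib, ← Finset.sum_add_distrib]
  apply Finset.sum_congr rfl
  intro j _
  show (M j ⊔ N j).card + (M j ⊓ N j).card = (M j).card + (N j).card
  unfold YoungDiagram.card
  rw [YoungDiagram.cells_sup, YoungDiagram.cells_inf]
  exact Finset.card_union_add_card_inter _ _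

theorem le_msup_left (M N : MP b) : ∀ j, M j ≤ msup M N j := fun _ => le_sup_left
theorem le_msup_right (M N : MP b) : ∀ j, N j ≤ msup M N j := fun _ => le_sup_right
theorem minf_le_left (M N : MP b) : ∀ j, minf M N j ≤ M j := fun _ => inf_le_left
theorem minf_le_right (M N : MP b) : ∀ j, minf M N j ≤ N j := fun _ => inf_le_right
theorem msup_le {M N L : MP b} (h1 : ∀ j, M j ≤ L j) (h2 : ∀ j, N j ≤ L j) :
    ∀ j, msup M N j ≤ L j := fun j => sup_le (h1 j) (h2 j)
theorem le_minf {M N L : MP b} (h1 : ∀ j, L j ≤ M j) (h2 : ∀ j, L j ≤ N j) :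
    ∀ j, L j ≤ minf M N j := fun j => le_inf (h1 j) (h2 j)

theorem cover_lattice {M N Λ : MP b} (hM : Cov M Λ) (hN : Cov N Λ) (hne : M ≠ N) :
    msup M N = Λ ∧ Cov (minf M N) M ∧ Cov (minf M N) N := by
  have hszM := hM.2
  have hszN := hN.2
  have hsupleΛ : ∀ j, msup M N j ≤ Λ j := msup_le hM.1 hN.1
  have h1 : msize M < msize (msup M N) := by
    by_contra h
    push_neg at h
    have he : M = msup M N := eq_of_le_of_msize_le (le_msup_left M N) h
    have hNM : N = M := by
      apply eq_of_le_of_msize_le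
      · intro j
        calc N j ≤ msup M N j := le_msup_right M N j
          _ = M j := (congrFun he j).symm
      · omega
    exact hne hNM.symm
  have h2 : msize (msup M N) ≤ msize Λ := msize_le hsupleΛ
  have h3 : msize (msup M N) = msize Λ := by omega
  have hsup : msup M N = Λ := eq_of_le_of_msize_le hsupleΛ (le_of_eq h3.symm)
  have h4 := msize_sup_add_inf M N
  refine ⟨hsup, ⟨minf_le_left M N, by omega⟩, ⟨minf_le_right M N, by omega⟩⟩

theorem cocover_lattice {ρ M N : MP b} (hM : Cov ρ M) (hN : Cov ρ N) (hne : M ≠ N) :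
    minf M N = ρ ∧ Cov M (msup M N) ∧ Cov N (msup M N) := by
  have hszM := hM.2
  have hszN := hN.2
  have hρinf : ∀ j, ρ j ≤ minf M N j := le_minf hM.1 hN.1
  have h1 : msize (minf M N) < msize M := by
    by_contra h
    push_neg at h
    have he : minf M N = M := eq_of_le_of_msize_le (minf_le_left M N) h
    have hMN : M = N := by
      apply eq_of_le_of_msize_le
      · intro j
        calc M j = minf M N j := (congrFun he j).symm
          _ ≤ N j := minf_le_right M N j
      · omega
    exact hne hMN
  have h2 : msize ρ ≤ msize (minf M N) := msize_le hρinf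
  have h3 : msize (minf M N) = msize ρ := by omega
  have hinf : minf M N = ρ := (eq_of_le_of_msize_le hρinf (le_of_eq h3)).symm
  have h4 := msize_sup_add_inf M N
  refine ⟨hinf, ⟨le_msup_left M N, by omega⟩, ⟨le_msup_right M N, by omega⟩⟩

/-- Equality helper for pairs in a sigma of nested subtypes of `MP b`. -/
theorem sigma_sub_ext {P : MP b → Prop} {Q : {x : MP b // P x} → MP b → Prop}
    {p q : Σ a : {x : MP b // P x}, {y : MP b // Q a y}}
    (h1 : p.1.1 = q.1.1) (h2 : p.2.1 = q.2.1) : p = q := by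
  obtain ⟨⟨A, hA⟩, ⟨B, hB⟩⟩ := p
  obtain ⟨⟨A', hA'⟩, ⟨B', hB'⟩⟩ := q
  dsimp only at h1 h2
  subst h1
  subst h2
  rfl


/-! ## The up-sum lemma -/

theorem up_sum (N : ℕ) : ∀ (M : MP b), msize M = N →
    ∑ Λ : {nu : MP b // Cov M nu}, t Λ.1 = b * (N + 1) * t M := by
  induction N using Nat.strong_induction_on with
  | _ N IH =>
    intro M hM
    classical
    set U := Fintype.card {nu : MP b // Cov M nu} with hU
    set D := Fintype.card {ρ : MP b // Cov ρ M} with hD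
    have hUD : U = D + b := by
      rw [hU, hD, ← Nat.card_eq_fintype_card, ← Nat.card_eq_fintype_card]
      exact corner_mp M
    -- Step A: branch each cover
    have hA : ∑ Λ : {nu : MP b // Cov M nu}, t Λ.1
        = ∑ p : Σ Λ : {nu : MP b // Cov M nu}, {ρ : MP b // Cov ρ Λ.1}, t p.2.1 := by
      rw [← Finset.univ_sigma_univ, Finset.sum_sigma]
      apply Finset.sum_congr rfl
      intro Λ _
      exact branch_t Λ.1 (by have := Λ.2.2; omega)
    -- Step Q: branch below then IH
    have hQ : ∑ q : Σ ρ : {ρ : MP b // Cov ρ M}, {ν : MP b // Cov ρ.1 ν}, t q.2.1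
        = b * N * ∑ ρ : {ρ : MP b // Cov ρ M}, t ρ.1 := by
      rw [← Finset.univ_sigma_univ, Finset.sum_sigma, Finset.mul_sum]
      apply Finset.sum_congr rfl
      intro ρ _
      have hρ : msize ρ.1 = N - 1 := by have := ρ.2.2; omega
      have hNpos : 1 ≤ N := by have := ρ.2.2; omega
      have := IH (N - 1) (by omega) ρ.1 hρ
      rw [this]
      have : N - 1 + 1 = N := by omega
      rw [this]
    -- sums of cocovers
    have hS : b * N * (∑ ρ : {ρ : MP b // Cov ρ M}, t ρ.1) = b * N * t M := by
      rcases Nat.eq_zero_or_pos N with rfl | hNpos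
      · simp
      · rw [← branch_t M (by omega)]
    -- split the P sum
    have hPsplit := Finset.sum_filter_add_sum_filter_not
      (Finset.univ : Finset (Σ Λ : {nu : MP b // Cov M nu}, {ρ : MP b // Cov ρ Λ.1}))
      (fun p => p.2.1 = M) (fun p => t p.2.1)
    have hQsplit := Finset.sum_filter_add_sum_filter_not
      (Finset.univ : Finset (Σ ρ : {ρ : MP b // Cov ρ M}, {ν : MP b // Cov ρ.1 ν}))
      (fun q => q.2.1 = M) (fun q => t q.2.1)
    -- P1 = U * t M
    have hP1 : ∑ p ∈ Finset.univ.filter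
        (fun (p : Σ Λ : {nu : MP b // Cov M nu}, {ρ : MP b // Cov ρ Λ.1}) => p.2.1 = M),
        t p.2.1 = U * t M := by
      rw [Finset.sum_congr rfl (fun p hp => by
        rw [(Finset.mem_filter.mp hp).2])]
      rw [Finset.sum_const, smul_eq_mul]
      congr 1
      rw [hU]
      apply Finset.card_bij (fun p _ => p.1)
      · intro a ha; exact Finset.mem_univ _
      · intro p hp p' hp' h
        exact sigma_sub_ext (congrArg Subtype.val h)
          (((Finset.mem_filter.mp hp).2).trans ((Finset.mem_filter.mp hp').2).symm)
      · intro Λ _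
        exact ⟨⟨Λ, ⟨M, Λ.2⟩⟩, Finset.mem_filter.mpr ⟨Finset.mem_univ _, rfl⟩, rfl⟩
    -- Q1 = D * t M
    have hQ1 : ∑ q ∈ Finset.univ.filter
        (fun (q : Σ ρ : {ρ : MP b // Cov ρ M}, {ν : MP b // Cov ρ.1 ν}) => q.2.1 = M),
        t q.2.1 = D * t M := by
      rw [Finset.sum_congr rfl (fun q hq => by
        rw [(Finset.mem_filter.mp hq).2])]
      rw [Finset.sum_const, smul_eq_mul]
      congr 1
      rw [hD]
      apply Finset.card_bij (fun q _ => q.1)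
      · intro a ha; exact Finset.mem_univ _
      · intro q hq q' hq' h
        exact sigma_sub_ext (congrArg Subtype.val h)
          (((Finset.mem_filter.mp hq).2).trans ((Finset.mem_filter.mp hq').2).symm)
      · intro ρ _
        exact ⟨⟨ρ, ⟨M, ρ.2⟩⟩, Finset.mem_filter.mpr ⟨Finset.mem_univ _, rfl⟩, rfl⟩
    -- P2 = Q2
    have hP2Q2 : ∑ p ∈ Finset.univ.filter
        (fun (p : Σ Λ : {nu : MP b // Cov M nu}, {ρ : MP b // Cov ρ Λ.1}) => ¬ p.2.1 = M),
        t p.2.1 = ∑ q ∈ Finset.univ.filter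
        (fun (q : Σ ρ : {ρ : MP b // Cov ρ M}, {ν : MP b // Cov ρ.1 ν}) => ¬ q.2.1 = M),
        t q.2.1 := by
      refine Finset.sum_bij'
        (fun p hp => ⟨⟨minf M p.2.1,
          (cover_lattice p.1.2 p.2.2 (fun he => (Finset.mem_filter.mp hp).2 he.symm)).2.1⟩,
          ⟨p.2.1,
          (cover_lattice p.1.2 p.2.2 (fun he => (Finset.mem_filter.mp hp).2 he.symm)).2.2⟩⟩)
        (fun q hq => ⟨⟨msup M q.2.1,
          (cocover_lattice q.1.2 q.2.2 (fun he => (Finset.mem_filter.mp hq).2 he.symm)).2.1⟩,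
          ⟨q.2.1,
          (cocover_lattice q.1.2 q.2.2 (fun he => (Finset.mem_filter.mp hq).2 he.symm)).2.2⟩⟩)
        ?_ ?_ ?_ ?_ ?_
      · intro p hp
        exact Finset.mem_filter.mpr ⟨Finset.mem_univ _, (Finset.mem_filter.mp hp).2⟩
      · intro q hq
        exact Finset.mem_filter.mpr ⟨Finset.mem_univ _, (Finset.mem_filter.mp hq).2⟩
      · intro p hp
        exact sigma_sub_ext
          (cover_lattice p.1.2 p.2.2 (fun he => (Finset.mem_filter.mp hp).2 he.symm)).1 rfl
      · intro q hq
        exact sigma_sub_ext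
          (cocover_lattice q.1.2 q.2.2 (fun he => (Finset.mem_filter.mp hq).2 he.symm)).1 rfl
      · intro p hp
        rfl
    -- combine
    apply Nat.add_right_cancel (m := D * t M)
    calc (∑ Λ : {nu : MP b // Cov M nu}, t Λ.1) + D * t M
        = (∑ p ∈ Finset.univ.filter
            (fun (p : Σ Λ : {nu : MP b // Cov M nu}, {ρ : MP b // Cov ρ Λ.1}) => p.2.1 = M),
            t p.2.1
          + ∑ p ∈ Finset.univ.filter
            (fun (p : Σ Λ : {nu : MP b // Cov M nu}, {ρ : MP b // Cov ρ Λ.1}) => ¬ p.2.1 = M),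
            t p.2.1) + D * t M := by rw [hA, ← hPsplit]
      _ = (U * t M + ∑ q ∈ Finset.univ.filter
            (fun (q : Σ ρ : {ρ : MP b // Cov ρ M}, {ν : MP b // Cov ρ.1 ν}) => ¬ q.2.1 = M),
            t q.2.1) + D * t M := by rw [hP1, hP2Q2]
      _ = U * t M + (D * t M + ∑ q ∈ Finset.univ.filter
            (fun (q : Σ ρ : {ρ : MP b // Cov ρ M}, {ν : MP b // Cov ρ.1 ν}) => ¬ q.2.1 = M),
            t q.2.1) := by ring
      _ = U * t M + (∑ q : Σ ρ : {ρ : MP b // Cov ρ M}, {ν : MP b // Cov ρ.1 ν}, t q.2.1) := by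
            rw [← hQ1, hQsplit]
      _ = U * t M + b * N * t M := by rw [hQ, hS]
      _ = b * (N + 1) * t M + D * t M := by rw [hUD]; ring


/-! ## Final assembly -/

theorem card_pairs (n : ℕ) :
    Nat.card (Σ lam : {lam : MP b // msize lam = n}, SYTt n lam.1 × SYTt n lam.1)
      = ∑ lam : {lam : MP b // msize lam = n}, t lam.1 * t lam.1 := by
  classical
  rw [Nat.card_eq_fintype_card, Fintype.card_sigma]
  apply Finset.sum_congr rfl
  intro lam _
  rw [Fintype.card_prod, ← Nat.card_eq_fintype_card, t_card lam.2]

instance unique_zero : Unique {lam : MP b // msize lam = 0} := by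
  refine ⟨⟨⟨fun _ => ⊥, ?_⟩⟩, ?_⟩
  · unfold msize
    apply Finset.sum_eq_zero
    intro j _
    show (⊥ : YoungDiagram).cells.card = 0
    rw [YoungDiagram.cells_bot]
    rfl
  · rintro ⟨lam, hlam⟩
    apply Subtype.ext
    funext j
    apply YoungDiagram.ext
    have h0 : (lam j).card = 0 :=
      Finset.sum_eq_zero_iff.mp hlam j (Finset.mem_univ j)
    rw [Finset.card_eq_zero.mp h0]
    show _ = (⊥ : YoungDiagram).cells
    rw [YoungDiagram.cells_bot]

theorem total_card (n : ℕ) :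
    Nat.card (Σ lam : {lam : MP b // msize lam = n}, SYTt n lam.1 × SYTt n lam.1)
      = b ^ n * n.factorial := by
  induction n with
  | zero =>
    rw [card_pairs]
    rw [Fintype.sum_unique]
    have : msize ((default : {lam : MP b // msize lam = 0}).1) = 0 :=
      (default : {lam : MP b // msize lam = 0}).2
    rw [t_bot this]
    simp
  | succ n IHn =>
    rw [card_pairs] at IHn ⊢
    classical
    have step1 : ∑ lam : {lam : MP b // msize lam = n + 1}, t lam.1 * t lam.1
        = ∑ p : Σ lam : {lam : MP b // msize lam = n + 1}, {mu : MP b // Cov mu lam.1},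
            t p.1.1 * t p.2.1 := by
      rw [← Finset.univ_sigma_univ, Finset.sum_sigma]
      apply Finset.sum_congr rfl
      intro lam _
      dsimp only
      rw [← Finset.mul_sum, ← branch_t lam.1 (by rw [lam.2]; omega)]
    have step2 : ∑ p : Σ lam : {lam : MP b // msize lam = n + 1}, {mu : MP b // Cov mu lam.1},
            t p.1.1 * t p.2.1
        = ∑ q : Σ mu : {mu : MP b // msize mu = n}, {nu : MP b // Cov mu.1 nu},
            t q.2.1 * t q.1.1 := by
      refine Finset.sum_nbij'
        (i := fun p => ⟨⟨p.2.1, by have := p.2.2.2; have := p.1.2; omega⟩, ⟨p.1.1, p.2.2⟩⟩)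
        (j := fun q => ⟨⟨q.2.1, by have := q.2.2.2; have := q.1.2; omega⟩, ⟨q.1.1, q.2.2⟩⟩)
        ?_ ?_ ?_ ?_ ?_
      · intro p _; exact Finset.mem_univ _
      · intro q _; exact Finset.mem_univ _
      · intro p _; exact sigma_sub_ext rfl rfl
      · intro q _; exact sigma_sub_ext rfl rfl
      · intro p _; rfl
    have step3 : ∑ q : Σ mu : {mu : MP b // msize mu = n}, {nu : MP b // Cov mu.1 nu},
            t q.2.1 * t q.1.1
        = ∑ mu : {mu : MP b // msize mu = n}, (b * (n + 1) * t mu.1) * t mu.1 := by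
      rw [← Finset.univ_sigma_univ, Finset.sum_sigma]
      apply Finset.sum_congr rfl
      intro mu _
      dsimp only
      rw [← Finset.sum_mul, up_sum n mu.1 mu.2]
    rw [step1, step2, step3]
    have : ∑ mu : {mu : MP b // msize mu = n}, (b * (n + 1) * t mu.1) * t mu.1
        = b * (n + 1) * ∑ mu : {mu : MP b // msize mu = n}, t mu.1 * t mu.1 := by
      rw [Finset.mul_sum]
      apply Finset.sum_congr rfl
      intro mu _
      ring
    rw [this, IHn, pow_succ, Nat.factorial_succ]
    ring

end MPdev

/-- The sum over all b-multipartitions λ of n of the square of the number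
of standard Young b-tableaux of shape λ equals bⁿ·n!  (stated as the cardinality of the
total space of pairs of standard b-tableaux of a common shape of total size n). -/
theorem stmt10 (b n : ℕ) (hb : 0 < b) :
    Nat.card (Σ lam : {lam : Fin b → YoungDiagram // ∑ j, (lam j).card = n},
        {T : MPTableau b n lam.1 // IsStandard T} × {T : MPTableau b n lam.1 // IsStandard T}) =
      b ^ n * n.factorial :=
  MPdev.total_card n
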